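/- DFA(fin,⊆) = CDFA(fin,⊆), FA(fin,⊆) = CFA(fin,⊆), DFA(fin,=) = CDFA(fin,=), and FA(fin,=) = CFA(fin,=). -/

import Mathlib

open Set

/-- A finite automaton used for recognizing ω-words over the alphabet `A`:
a finite type of states, a transition relation, an initial state and an
acceptance table (a set of sets of states). -/
structure OFA (A : Type) : Type 1 where
  Q : Type
  [finQ : Finite Q]
  T : Q → A → Q → Prop
  q0 : Q
  Acc : Set (Set Q)

attribute [instance] OFA.finQ

namespace OFA

variable {A : Type}

/-- Deterministic automaton: at most one successor per state and letter. -/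
def Deterministic (M : OFA A) : Prop :=
  ∀ p a q q', M.T p a q → M.T p a q' → q = q'

/-- Complete automaton: at least one successor per state and letter. -/
def Complete (M : OFA A) : Prop :=
  ∀ p a, ∃ q, M.T p a q

/-- `p` is an initial infinite path of `M` with label `x`. -/
def InitPath (M : OFA A) (p : ℕ → M.Q) (x : ℕ → A) : Prop :=
  p 0 = M.q0 ∧ ∀ i, M.T (p i) (x i) (p (i + 1))

/-- States visited at least once (at a positive index). -/
def runSet (M : OFA A) (p : ℕ → M.Q) : Set M.Q := {q | ∃ i, 0 < i ∧ p i = q}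

/-- States visited infinitely often. -/
def infSet (M : OFA A) (p : ℕ → M.Q) : Set M.Q := {q | ∀ n, ∃ i, n ≤ i ∧ p i = q}

/-- States visited finitely many times but at least once. -/
def finSet (M : OFA A) (p : ℕ → M.Q) : Set M.Q := M.runSet p \ M.infSet p

/-- States visited finitely many times or never. -/
def ninfSet (M : OFA A) (p : ℕ → M.Q) : Set M.Q := (M.infSet p)ᶜ

end OFA

/-- Selector for the set of states associated to a path. -/
inductive CSel | run | inf | fin | ninf

/-- Selector for the comparison relation with a member of the acceptance table. -/
inductive RSel | meet | sub | eq

def OFA.csel {A : Type} (M : OFA A) : CSel → (ℕ → M.Q) → Set M.Q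
  | .run => M.runSet
  | .inf => M.infSet
  | .fin => M.finSet
  | .ninf => M.ninfSet

def RSel.holds {Q : Type} : RSel → Set Q → Set Q → Prop
  | .meet => fun S F => (S ∩ F).Nonempty
  | .sub => fun S F => S ⊆ F
  | .eq => fun S F => S = F

/-- The ω-language accepted by `M` under the condition `(c, r)`. -/
def OFA.Lang {A : Type} (M : OFA A) (c : CSel) (r : RSel) : Set (ℕ → A) :=
  {x | ∃ p, M.InitPath p x ∧ ∃ F ∈ M.Acc, RSel.holds r (M.csel c p) F}

/-- The ω-language accepted by `M` under the condition 𝔸 : some `F ∈ Acc` with `F ⊆ run p`. -/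
def OFA.LangA {A : Type} (M : OFA A) : Set (ℕ → A) :=
  {x | ∃ p, M.InitPath p x ∧ ∃ F ∈ M.Acc, F ⊆ M.runSet p}

/-- The ω-language accepted by `M` under the condition 𝔸' : some `F ∈ Acc` with `F ⊈ run p`. -/
def OFA.LangA' {A : Type} (M : OFA A) : Set (ℕ → A) :=
  {x | ∃ p, M.InitPath p x ∧ ∃ F ∈ M.Acc, ¬ F ⊆ M.runSet p}

/-- The ω-language accepted by `M` under the condition 𝕃 : some `F ∈ Acc` with `F ⊆ inf p`. -/
def OFA.LangL {A : Type} (M : OFA A) : Set (ℕ → A) :=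
  {x | ∃ p, M.InitPath p x ∧ ∃ F ∈ M.Acc, F ⊆ M.infSet p}

/-- The ω-language accepted by `M` under the condition 𝕃' : some `F ∈ Acc` with `F ⊈ inf p`. -/
def OFA.LangL' {A : Type} (M : OFA A) : Set (ℕ → A) :=
  {x | ∃ p, M.InitPath p x ∧ ∃ F ∈ M.Acc, ¬ F ⊆ M.infSet p}

/-- The class of ω-languages of the form `L M` for automata `M` satisfying `P`. -/
def AutClass (A : Type) (P : OFA A → Prop) (L : (M : OFA A) → Set (ℕ → A)) :
    Set (Set (ℕ → A)) :=
  {X | ∃ M : OFA A, P M ∧ L M = X}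

/-- The finite factor `x_i x_{i+1} … x_{j-1}` of the ω-word `x`. -/
def extract {A : Type} (x : ℕ → A) (i j : ℕ) : List A :=
  (List.range (j - i)).map fun k => x (i + k)

/-- The ω-language `V · U^ω`: ω-words of the form `u₀u₁u₂⋯` with `u₀ ∈ V`
and all `uᵢ` (i ≥ 1) nonempty words of `U`, described via cut points. -/
def omegaPiece {A : Type} (V U : Language A) : Set (ℕ → A) :=
  {x | ∃ c : ℕ → ℕ, (∀ i, c i < c (i + 1)) ∧
    extract x 0 (c 0) ∈ V ∧ ∀ i, extract x (c i) (c (i + 1)) ∈ U}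

/-- An ω-language is ω-rational if it is a finite union `⋃ᵢ Vᵢ · Uᵢ^ω`
with all `Vᵢ`, `Uᵢ` rational (regular) languages of finite words. -/
def IsOmegaRat {A : Type} (L : Set (ℕ → A)) : Prop :=
  ∃ (n : ℕ) (V U : Fin n → Language A),
    (∀ i, (V i).IsRegular) ∧ (∀ i, (U i).IsRegular) ∧
    L = ⋃ i, omegaPiece (V i) (U i)

/-- Countable union of closed sets. -/
def IsFsigmaSet {X : Type*} [TopologicalSpace X] (S : Set X) : Prop :=
  ∃ f : ℕ → Set X, (∀ n, IsClosed (f n)) ∧ S = ⋃ n, f n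

/-- Countable intersection of open sets. -/
def IsGdeltaSet {X : Type*} [TopologicalSpace X] (S : Set X) : Prop :=
  ∃ f : ℕ → Set X, (∀ n, IsOpen (f n)) ∧ S = ⋂ n, f n

namespace MyAux

open OFA

variable {A : Type}

/-- Completion of an automaton: add a dead state `inr false` (entered once on a
missing transition) and an absorbing state `inr true`. -/
def comp (M : OFA A) : OFA A where
  Q := M.Q ⊕ Bool
  T := fun p a q =>
    match p, q with
    | Sum.inl p, Sum.inl q => M.T p a q
    | Sum.inl p, Sum.inr b => b = false ∧ ¬ ∃ q, M.T p a q
    | Sum.inr _, Sum.inr b => b = true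
    | Sum.inr _, Sum.inl _ => False
  q0 := Sum.inl M.q0
  Acc := (Set.image Sum.inl) '' M.Acc

lemma comp_det (M : OFA A) (h : M.Deterministic) : (comp M).Deterministic := by
  rintro (p | b) a (q | b1) (q' | b2) h1 h2 <;> simp only [comp] at h1 h2
  · exact congrArg Sum.inl (h p a q q' h1 h2)
  · exact absurd ⟨q, h1⟩ h2.2
  · exact absurd ⟨q', h2⟩ h1.2
  · rw [h1.1, h2.1]
  · rw [h1, h2]

lemma comp_complete (M : OFA A) : (comp M).Complete := by
  rintro (p | b) a
  · by_cases h : ∃ q, M.T p a q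
    · obtain ⟨q, hq⟩ := h
      exact ⟨Sum.inl q, hq⟩
    · exact ⟨Sum.inr false, rfl, h⟩
  · exact ⟨Sum.inr true, rfl⟩

lemma initPath_comp {M : OFA A} {p : ℕ → M.Q} {x : ℕ → A} (h : M.InitPath p x) :
    (comp M).InitPath (fun i => Sum.inl (p i)) x :=
  ⟨congrArg Sum.inl h.1, fun i => h.2 i⟩

lemma finSet_comp (M : OFA A) (p : ℕ → M.Q) :
    (comp M).finSet (fun i => Sum.inl (p i)) = Sum.inl '' M.finSet p := by
  have hrun : (comp M).runSet (fun i => Sum.inl (p i)) = Sum.inl '' M.runSet p := by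
    ext q
    constructor
    · rintro ⟨i, hi, rfl⟩
      exact ⟨p i, ⟨i, hi, rfl⟩, rfl⟩
    · rintro ⟨q, ⟨i, hi, rfl⟩, rfl⟩
      exact ⟨i, hi, rfl⟩
  have hinf : (comp M).infSet (fun i => Sum.inl (p i)) = Sum.inl '' M.infSet p := by
    ext q
    constructor
    · intro hq
      obtain ⟨i, _, hi⟩ := hq 0
      have hi' : Sum.inl (p i) = q := hi
      refine ⟨p i, fun n => ?_, hi'⟩
      obtain ⟨j, hj, hj'⟩ := hq n
      have hj2 : (Sum.inl (p j) : (comp M).Q) = Sum.inl (p i) := by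
        have : Sum.inl (p j) = q := hj'
        rw [this, ← hi']
      exact ⟨j, hj, Sum.inl_injective hj2⟩
    · rintro ⟨q, hq, rfl⟩ n
      obtain ⟨j, hj, hj'⟩ := hq n
      exact ⟨j, hj, congrArg Sum.inl hj'⟩
  rw [OFA.finSet, Set.image_diff Sum.inl_injective, ← hrun, ← hinf]; rfl

/-- Once the path of `comp M` leaves the `inl` part, it stays in `inr true`. -/
lemma comp_absorb {M : OFA A} {p : ℕ → (comp M).Q} {x : ℕ → A}
    (h : ∀ i, (comp M).T (p i) (x i) (p (i + 1))) {i : ℕ} {b : Bool}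
    (hi : p i = Sum.inr b) : ∀ k, p (i + 1 + k) = Sum.inr true := by
  intro k
  induction k with
  | zero =>
    have h0 := h i
    rw [hi] at h0
    show p (i + 1) = Sum.inr true
    cases hp : p (i + 1) <;> rw [hp] at h0 <;> simp only [comp] at h0
    rw [h0]
  | succ k ih =>
    have h0 := h (i + 1 + k)
    rw [ih] at h0
    show p (i + 1 + k + 1) = Sum.inr true
    cases hp : p (i + 1 + k + 1) <;> rw [hp] at h0 <;> simp only [comp] at h0
    rw [h0]

/-- Any initial path of `comp M` either stays in the `inl` part forever,
or visits the dead state `inr false` finitely often (but once). -/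
lemma comp_dichotomy {M : OFA A} {p : ℕ → (comp M).Q} {x : ℕ → A}
    (h : (comp M).InitPath p x) :
    (∀ i, ∃ q, p i = Sum.inl q) ∨ Sum.inr false ∈ (comp M).finSet p := by
  by_cases hall : ∀ i, ∃ q, p i = Sum.inl q
  · exact Or.inl hall
  · right
    obtain ⟨i, hi⟩ := not_forall.mp hall
    have hex : ∃ i, ∃ b, p i = Sum.inr b := by
      refine ⟨i, ?_⟩
      cases hp : p i with
      | inl q => exact absurd (show ∃ q, p i = Sum.inl q from ⟨q, hp⟩) hi
      | inr b => exact ⟨b, rfl⟩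
    classical
    obtain ⟨b, hb⟩ := Nat.find_spec hex
    have hj0 : 0 < Nat.find hex := by
      rcases Nat.eq_zero_or_pos (Nat.find hex) with h0 | h0
      · rw [h0, h.1] at hb
        exact absurd hb (by simp [comp])
      · exact h0
    -- the predecessor is inl, so the entering transition forces b = false
    have hpred : ∃ q, p (Nat.find hex - 1) = Sum.inl q := by
      cases hp : p (Nat.find hex - 1) with
      | inl q => exact ⟨q, rfl⟩
      | inr b => exact absurd (Nat.find_min' hex ⟨b, hp⟩) (by omega)
    obtain ⟨q, hq⟩ := hpred
    have htr := h.2 (Nat.find hex - 1)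
    have hj1 : Nat.find hex - 1 + 1 = Nat.find hex := by omega
    rw [hj1, hq, hb] at htr
    have hbf : b = false := htr.1
    subst hbf
    constructor
    · exact ⟨Nat.find hex, hj0, hb⟩
    · intro hinf
      obtain ⟨k, hk, hk'⟩ := hinf (Nat.find hex + 1)
      have hkt : p k = Sum.inr true := by
        have h2 := comp_absorb h.2 hb (k - (Nat.find hex + 1))
        rwa [show Nat.find hex + 1 + (k - (Nat.find hex + 1)) = k by omega] at h2
      rw [hk'] at hkt
      exact Bool.false_ne_true (Sum.inr_injective hkt)

lemma lang_comp (M : OFA A) (r : RSel) (hr : r = RSel.sub ∨ r = RSel.eq) :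
    (comp M).Lang CSel.fin r = M.Lang CSel.fin r := by
  ext x
  constructor
  · rintro ⟨p, hp, F', ⟨F, hF, rfl⟩, hacc⟩
    rcases comp_dichotomy hp with hall | hdead
    · choose q hq using hall
      have hpq : p = fun i => Sum.inl (q i) := funext hq
      subst hpq
      have hq0 : q 0 = M.q0 := Sum.inl_injective hp.1
      refine ⟨q, ⟨hq0, fun i => hp.2 i⟩, F, hF, ?_⟩
      rw [OFA.csel, finSet_comp] at hacc
      rcases hr with rfl | rfl
      · exact (Set.image_subset_image_iff Sum.inl_injective).mp hacc
      · exact Set.image_injective.mpr Sum.inl_injective hacc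
    · exfalso
      rcases hr with rfl | rfl
      · obtain ⟨q, _, hq⟩ := hacc hdead
        simp at hq
      · rw [OFA.csel] at hacc
        rw [hacc] at hdead
        obtain ⟨q, _, hq⟩ := hdead
        simp at hq
  · rintro ⟨p, hp, F, hF, hacc⟩
    refine ⟨fun i => Sum.inl (p i), initPath_comp hp, Sum.inl '' F, ⟨F, hF, rfl⟩, ?_⟩
    rw [OFA.csel, finSet_comp]
    rcases hr with rfl | rfl
    · exact Set.image_mono hacc
    · exact congrArg _ hacc

end MyAux

theorem stmt_17 (A : Type) [Fintype A] :
    AutClass A OFA.Deterministic (fun M => M.Lang CSel.fin RSel.sub) = AutClass A (fun M : OFA A => M.Deterministic ∧ M.Complete) (fun M => M.Lang CSel.fin RSel.sub) ∧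
    AutClass A (fun _ : OFA A => True) (fun M => M.Lang CSel.fin RSel.sub) = AutClass A OFA.Complete (fun M => M.Lang CSel.fin RSel.sub) ∧
    AutClass A OFA.Deterministic (fun M => M.Lang CSel.fin RSel.eq) = AutClass A (fun M : OFA A => M.Deterministic ∧ M.Complete) (fun M => M.Lang CSel.fin RSel.eq) ∧
    AutClass A (fun _ : OFA A => True) (fun M => M.Lang CSel.fin RSel.eq) = AutClass A OFA.Complete (fun M => M.Lang CSel.fin RSel.eq) := by
  have key : ∀ (P P' : OFA A → Prop) (r : RSel), (r = RSel.sub ∨ r = RSel.eq) →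
      (∀ M : OFA A, P' M → P M) → (∀ M : OFA A, P M → P (MyAux.comp M)) →
      (∀ M : OFA A, P M → P' (MyAux.comp M)) →
      AutClass A P (fun M => M.Lang CSel.fin r) = AutClass A P' (fun M => M.Lang CSel.fin r) := by
    intro P P' r hr h1 h2 h3
    ext X
    constructor
    · rintro ⟨M, hM, rfl⟩
      exact ⟨MyAux.comp M, h3 M hM, MyAux.lang_comp M r hr⟩
    · rintro ⟨M, hM, rfl⟩
      exact ⟨M, h1 M hM, rfl⟩
  refine ⟨?_, ?_, ?_, ?_⟩
  · exact key _ _ _ (Or.inl rfl) (fun M h => h.1) (fun M h => MyAux.comp_det M h)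
      (fun M h => ⟨MyAux.comp_det M h, MyAux.comp_complete M⟩)
  · exact key _ _ _ (Or.inl rfl) (fun M _ => trivial) (fun M _ => trivial)
      (fun M _ => MyAux.comp_complete M)
  · exact key _ _ _ (Or.inr rfl) (fun M h => h.1) (fun M h => MyAux.comp_det M h)
      (fun M h => ⟨MyAux.comp_det M h, MyAux.comp_complete M⟩)
  · exact key _ _ _ (Or.inr rfl) (fun M _ => trivial) (fun M _ => trivial)
      (fun M _ => MyAux.comp_complete M)
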